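/- Let n, t ∈ ℕ with t < n − 1, let θ_1, …, θ_t be positive real numbers, let u_1, …, u_t ∈ ℝ^n be vectors each orthogonal to the all-ones vector, and set L = Σ_{i=1}^t θ_i u_i u_iᵀ. Let A = [ω_{ij}] = −L + Diag(L_{11}, …, L_{nn}), a symmetric matrix with zero diagonal. If A is irreducible — equivalently, the simple graph on vertex set [n] whose edges are the pairs {i,j} with ω_{ij} ≠ 0 is connected — then some entry of A is negative. -/

import Mathlib

open Matrix

theorem irreducible_low_rank_has_negative_entry {n t : ℕ} (ht : t < n - 1)
    (θ : Fin t → ℝ) (hθ : ∀ i, 0 < θ i)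
    (u : Fin t → Fin n → ℝ) (hones : ∀ i, ∑ l, u i l = 0)
    (L A : Matrix (Fin n) (Fin n) ℝ)
    (hL : L = ∑ i, θ i • Matrix.vecMulVec (u i) (u i))
    (hA : A = -L + Matrix.diagonal (fun i => L i i))
    (hconn : (SimpleGraph.fromRel (fun i j : Fin n => A i j ≠ 0)).Connected) :
    ∃ i j, A i j < 0 := by
  by_contra hcon
  push_neg at hcon
  have hn2 : t + 2 ≤ n := by omega
  -- entrywise formula for L
  have hLe : ∀ i j, L i j = ∑ k, θ k * (u k i * u k j) := by
    intro i j
    simp [hL, Matrix.sum_apply, Matrix.vecMulVec_apply]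
  have hLsymm : ∀ i j, L i j = L j i := by
    intro i j
    simp only [hLe]
    exact Finset.sum_congr rfl fun k _ => by ring
  -- row sums of L are zero
  have hrow : ∀ i, ∑ j, L i j = 0 := by
    intro i
    simp only [hLe]
    rw [Finset.sum_comm]
    apply Finset.sum_eq_zero
    intro k _
    have : ∑ j, θ k * (u k i * u k j) = θ k * u k i * ∑ j, u k j := by
      rw [Finset.mul_sum]
      exact Finset.sum_congr rfl fun j _ => by ring
    rw [this, hones k, mul_zero]
  -- find a nonzero x orthogonal to 1 and all u k
  set M : Matrix (Fin (t + 1)) (Fin n) ℝ := Fin.cons (fun _ => 1) u with hM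
  have hnotinj : ¬ Function.Injective M.mulVecLin := by
    intro hinj
    have h := LinearMap.finrank_le_finrank_of_injective hinj
    simp only [Module.finrank_fintype_fun_eq_card, Fintype.card_fin] at h
    omega
  obtain ⟨a, b, hab, hne⟩ := Function.not_injective_iff.mp hnotinj
  set x : Fin n → ℝ := a - b with hxdef
  have hx0 : x ≠ 0 := sub_ne_zero.mpr hne
  have hfx : M.mulVecLin x = 0 := by
    rw [hxdef, map_sub, hab, sub_self]
  have hsum : ∑ l, x l = 0 := by
    have h := congrFun hfx 0
    rw [Matrix.mulVecLin_apply] at h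
    simpa [Matrix.mulVecLin_apply, Matrix.mulVec, dotProduct, hM] using h
  have hux : ∀ k, ∑ l, u k l * x l = 0 := by
    intro k
    have h := congrFun hfx k.succ
    rw [Matrix.mulVecLin_apply] at h
    simpa [Matrix.mulVecLin_apply, Matrix.mulVec, dotProduct, hM] using h
  -- L x = 0
  have hLx : ∀ i, ∑ j, L i j * x j = 0 := by
    intro i
    simp only [hLe, Finset.sum_mul]
    rw [Finset.sum_comm]
    apply Finset.sum_eq_zero
    intro k _
    have : ∑ j, θ k * (u k i * u k j) * x j = θ k * u k i * ∑ j, u k j * x j := by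
      rw [Finset.mul_sum]
      exact Finset.sum_congr rfl fun j _ => by ring
    rw [this, hux k, mul_zero]
  have hAe : ∀ i j, i ≠ j → A i j = -L i j := by
    intro i j hij
    simp [hA, Matrix.diagonal_apply_ne _ hij]
  -- the quadratic-form sum vanishes
  have h1 : ∀ i j : Fin n, A i j * (x i - x j) ^ 2 =
      -(L i j * x i ^ 2) + 2 * (L i j * x j) * x i + -(L i j * x j ^ 2) := by
    intro i j
    rcases eq_or_ne i j with rfl | hij
    · simp only [sub_self]; ring
    · rw [hAe i j hij]; ring
  have hS : ∑ i, ∑ j, A i j * (x i - x j) ^ 2 = 0 := by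
    simp only [h1]
    have hper : ∀ i : Fin n, ∑ j, (-(L i j * x i ^ 2) + 2 * (L i j * x j) * x i
        + -(L i j * x j ^ 2)) = ∑ j, -(L i j * x j ^ 2) := by
      intro i
      rw [Finset.sum_add_distrib, Finset.sum_add_distrib]
      have e1 : ∑ j, -(L i j * x i ^ 2) = 0 := by
        rw [Finset.sum_neg_distrib, ← Finset.sum_mul, hrow i, zero_mul, neg_zero]
      have e2 : ∑ j, 2 * (L i j * x j) * x i = 0 := by
        have : ∑ j, 2 * (L i j * x j) * x i = 2 * (∑ j, L i j * x j) * x i := by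
          rw [Finset.mul_sum, Finset.sum_mul]
        rw [this, hLx i, mul_zero, zero_mul]
      rw [e1, e2, zero_add, zero_add]
    simp only [hper]
    rw [Finset.sum_comm]
    apply Finset.sum_eq_zero
    intro j _
    rw [Finset.sum_neg_distrib, ← Finset.sum_mul]
    have : ∑ i, L i j = 0 := by
      rw [Finset.sum_congr rfl fun i _ => hLsymm i j, hrow j]
    rw [this, zero_mul, neg_zero]
  -- each term is zero
  have hterm : ∀ i j, A i j * (x i - x j) ^ 2 = 0 := by
    have hnn : ∀ i j : Fin n, 0 ≤ A i j * (x i - x j) ^ 2 := fun i j =>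
      mul_nonneg (hcon i j) (sq_nonneg _)
    intro i j
    have houter := (Finset.sum_eq_zero_iff_of_nonneg
      (fun i _ => Finset.sum_nonneg fun j _ => hnn i j)).mp hS i (Finset.mem_univ i)
    exact (Finset.sum_eq_zero_iff_of_nonneg (fun j _ => hnn i j)).mp houter j
      (Finset.mem_univ j)
  have hxi : ∀ i j, A i j ≠ 0 → x i = x j := by
    intro i j hij
    have := hterm i j
    rcases mul_eq_zero.mp this with h | h
    · exact absurd h hij
    · exact sub_eq_zero.mp (pow_eq_zero_iff two_ne_zero |>.mp h)
  have hAsymm : ∀ i j, A i j = A j i := by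
    intro i j
    rcases eq_or_ne i j with rfl | hij
    · rfl
    · rw [hAe i j hij, hAe j i (Ne.symm hij), hLsymm i j]
  have hadj : ∀ i j : Fin n,
      (SimpleGraph.fromRel (fun i j : Fin n => A i j ≠ 0)).Adj i j → x i = x j := by
    intro i j h
    rw [SimpleGraph.fromRel_adj] at h
    rcases h.2 with h' | h'
    · exact hxi i j h'
    · exact hxi i j (by rw [hAsymm i j]; exact h')
  have hconst : ∀ i j : Fin n, x i = x j := by
    intro i j
    obtain ⟨w⟩ := hconn.preconnected i j
    induction w with
    | nil => rfl
    | cons h p ih => exact (hadj _ _ h).trans ih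
  -- conclude x = 0, contradiction
  have hnpos : 0 < n := by omega
  have i0 : Fin n := ⟨0, hnpos⟩
  have hxzero : ∀ i, x i = 0 := by
    intro i
    have : ∑ l, x l = ∑ l : Fin n, x i := Finset.sum_congr rfl fun l _ => hconst l i
    rw [hsum] at this
    rw [Finset.sum_const, Finset.card_univ, Fintype.card_fin] at this
    have : (n : ℝ) * x i = 0 := by
      rw [nsmul_eq_mul] at this; linarith
    rcases mul_eq_zero.mp this with h | h
    · exact absurd h (by positivity)
    · exact h
  exact hx0 (funext hxzero)
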